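/- Define U(x,y) = (1/2)·ln(2y + c + √(4x² + 4y² + 4cy + c²)) − ln x + c₂ on the domain x > 0 where 4x² + (2y+c)² > 0. Then U satisfies the Ernst equation U_x + x·U_{yy} + x·U_{xx} = 0. -/

import Mathlib

/-- The potential `U(x,y) = ½ ln(2y + c + √(4x² + 4y² + 4cy + c²)) - ln x + c₂`. -/
noncomputable def UZ (c c2 x y : ℝ) : ℝ :=
  (1 / 2) * Real.log (2 * y + c + Real.sqrt (4 * x ^ 2 + 4 * y ^ 2 + 4 * c * y + c ^ 2))
    - Real.log x + c2

noncomputable def Aq (c x y : ℝ) : ℝ := 4 * x ^ 2 + 4 * y ^ 2 + 4 * c * y + c ^ 2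

lemma hAy (c x y : ℝ) : HasDerivAt (fun y' => Aq c x y') (8 * y + 4 * c) y := by
  unfold Aq
  have h := ((((hasDerivAt_pow 2 y).const_mul (4:ℝ)).const_add (4*x^2)).add
    ((hasDerivAt_id y).const_mul (4*c))).add_const (c^2)
  refine h.congr_deriv ?_
  push_cast; ring

lemma hAx (c x y : ℝ) : HasDerivAt (fun x' => Aq c x' y) (8 * x) x := by
  unfold Aq
  have h := ((((hasDerivAt_pow 2 x).const_mul (4:ℝ)).add_const (4*y^2)).add_const (4*c*y)).add_const (c^2)
  refine h.congr_deriv ?_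
  push_cast; ring

lemma sum_pos {c x y : ℝ} (hx : 0 < x) (h : 0 < Aq c x y) :
    0 < 2 * y + c + Real.sqrt (Aq c x y) := by
  have h1 : |2*y+c| < Real.sqrt (Aq c x y) := by
    rw [← Real.sqrt_sq_eq_abs]
    apply Real.sqrt_lt_sqrt (sq_nonneg _)
    unfold Aq; nlinarith
  have := neg_abs_le (2*y+c)
  linarith

noncomputable def UZ' (c c2 x y : ℝ) : ℝ :=
  (1 / 2) * Real.log (2 * y + c + Real.sqrt (Aq c x y)) - Real.log x + c2

lemma dY {c x y : ℝ} (c2 : ℝ) (hx : 0 < x) (h : 0 < Aq c x y) :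
    HasDerivAt (fun y' => UZ' c c2 x y') (Real.sqrt (Aq c x y))⁻¹ y := by
  set s := Real.sqrt (Aq c x y) with hs
  have hspos : 0 < s := Real.sqrt_pos.2 h
  have hsum := sum_pos hx h
  have hsqrt : HasDerivAt (fun y' => Real.sqrt (Aq c x y')) ((8*y+4*c)/(2*s)) y :=
    (hAy c x y).sqrt (ne_of_gt h)
  have h2 : HasDerivAt (fun y' => 2*y'+c+Real.sqrt (Aq c x y'))
      (2*1 + (8*y+4*c)/(2*s)) y :=
    (((hasDerivAt_id y).const_mul 2).add_const c).add hsqrt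
  have h3 := (((h2.log (ne_of_gt hsum)).const_mul (1/2:ℝ)).sub_const (Real.log x)).add_const c2
  refine h3.congr_deriv ?_
  field_simp
  ring

lemma dX {c x y : ℝ} (c2 : ℝ) (hx : 0 < x) (h : 0 < Aq c x y) :
    HasDerivAt (fun x' => UZ' c c2 x' y)
      (-(Real.sqrt (Aq c x y) + (2*y+c)) / (2 * x * Real.sqrt (Aq c x y))) x := by
  set s := Real.sqrt (Aq c x y) with hs
  have hspos : 0 < s := Real.sqrt_pos.2 h
  have hsum := sum_pos hx h
  have hs2 : s^2 = Aq c x y := Real.sq_sqrt h.le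
  have hsqrt : HasDerivAt (fun x' => Real.sqrt (Aq c x' y)) ((8*x)/(2*s)) x :=
    (hAx c x y).sqrt (ne_of_gt h)
  have h2 : HasDerivAt (fun x' => 2*y+c+Real.sqrt (Aq c x' y)) ((8*x)/(2*s)) x :=
    hsqrt.const_add (2*y+c)
  have h3 := (((h2.log (ne_of_gt hsum)).const_mul (1/2:ℝ)).sub
    (Real.hasDerivAt_log (ne_of_gt hx))).add_const c2
  refine h3.congr_deriv ?_
  have key : s^2 = 4*x^2+(2*y+c)^2 := by rw [hs2]; unfold Aq; ring
  rw [← hs]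
  have hsum' : 2*y+c+s ≠ 0 := by rw [hs]; exact ne_of_gt hsum
  field_simp
  linear_combination (-2) * key

theorem stmt15' (c c2 : ℝ) (x y : ℝ) (hx : 0 < x)
    (hdom : 0 < 4 * x ^ 2 + (2 * y + c) ^ 2) :
    deriv (fun x' => UZ' c c2 x' y) x
      + x * deriv (fun y' => deriv (fun y'' => UZ' c c2 x y'') y') y
      + x * deriv (fun x' => deriv (fun x'' => UZ' c c2 x'' y) x') x = 0 := by
  have hA0 : 0 < Aq c x y := by unfold Aq; nlinarith
  set s := Real.sqrt (Aq c x y) with hs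
  have hspos : 0 < s := Real.sqrt_pos.2 hA0
  have key : s^2 = 4*x^2+(2*y+c)^2 := by
    rw [hs, Real.sq_sqrt hA0.le]; unfold Aq; ring
  -- first derivative in x
  have e1 : deriv (fun x' => UZ' c c2 x' y) x = -(s + (2*y+c)) / (2 * x * s) :=
    (dX c2 hx hA0).deriv
  -- second derivative in y
  have hyev : (fun y' => deriv (fun y'' => UZ' c c2 x y'') y')
      =ᶠ[nhds y] (fun y' => (Real.sqrt (Aq c x y'))⁻¹) := by
    have hc : ContinuousAt (fun y' => Aq c x y') y := by
      unfold Aq; fun_prop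
    filter_upwards [hc.eventually (eventually_gt_nhds hA0)] with y' hy'
    exact (dY c2 hx hy').deriv
  have hsqrty : HasDerivAt (fun y' => Real.sqrt (Aq c x y')) ((8*y+4*c)/(2*s)) y :=
    (hAy c x y).sqrt (ne_of_gt hA0)
  have e2 : deriv (fun y' => deriv (fun y'' => UZ' c c2 x y'') y') y
      = -((8*y+4*c)/(2*s)) / s^2 := by
    rw [hyev.deriv_eq]
    exact (hsqrty.inv (ne_of_gt hspos)).deriv
  -- second derivative in x
  have hxev : (fun x' => deriv (fun x'' => UZ' c c2 x'' y) x')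
      =ᶠ[nhds x] (fun x' => -((Real.sqrt (Aq c x' y) + (2*y+c)) / (2 * x' * Real.sqrt (Aq c x' y)))) := by
    have hc : ContinuousAt (fun x' => Aq c x' y) x := by
      unfold Aq; fun_prop
    filter_upwards [hc.eventually (eventually_gt_nhds hA0), eventually_gt_nhds hx] with x' h1 h2
    rw [show (fun x'' => UZ' c c2 x'' y) = (fun x' => UZ' c c2 x' y) from rfl, (dX c2 h2 h1).deriv, neg_div]
  have hsqrtx : HasDerivAt (fun x' => Real.sqrt (Aq c x' y)) ((8*x)/(2*s)) x :=
    (hAx c x y).sqrt (ne_of_gt hA0)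
  have hN : HasDerivAt (fun x' => Real.sqrt (Aq c x' y) + (2*y+c)) ((8*x)/(2*s)) x :=
    hsqrtx.add_const _
  have hD : HasDerivAt (fun x' => 2 * x' * Real.sqrt (Aq c x' y))
      (2*1*s + 2*x*((8*x)/(2*s))) x :=
    ((hasDerivAt_id x).const_mul 2).mul hsqrtx
  have hDne : 2 * x * s ≠ 0 := by positivity
  have e3 : deriv (fun x' => deriv (fun x'' => UZ' c c2 x'' y) x') x
      = -(((8*x)/(2*s) * (2*x*s) - (Real.sqrt (Aq c x y) + (2*y+c)) * (2*1*s + 2*x*((8*x)/(2*s)))) / (2*x*s)^2) := by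
    rw [hxev.deriv_eq]
    exact ((hN.div hD hDne).neg).deriv
  rw [e1, e2, e3, ← hs]
  field_simp
  ring_nf


/-- The potential `UZ` satisfies the Ernst equation `U_x + x·U_{yy} + x·U_{xx} = 0`. -/
theorem stmt15 (c c2 : ℝ) (x y : ℝ) (hx : 0 < x)
    (hdom : 0 < 4 * x ^ 2 + (2 * y + c) ^ 2) :
    deriv (fun x' => UZ c c2 x' y) x
      + x * deriv (fun y' => deriv (fun y'' => UZ c c2 x y'') y') y
      + x * deriv (fun x' => deriv (fun x'' => UZ c c2 x'' y) x') x = 0 := by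
  have h : UZ = UZ' := rfl
  rw [h]
  exact stmt15' c c2 x y hx hdom
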